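/- Let ε ∈ [0,1] and suppose nonnegative-integer-valued functions n, m on a finite set E satisfy both (i) Σ_e n(e)² + ((1−ε)/(1+ε))Σ_e n(e) ≤ Σ_e m(e)² + ((1−ε)/(1+ε))Σ_e m(e), and (ii) Σ_e (n(e)² − (ε/(1+ε))n(e)) ≤ Σ_e m(e)(n(e) + 1/(1+ε)). Then Σ_e n(e)² ≤ ((√3+1)/(√3+ε))·Σ_e m(e)². -/

import Mathlib

lemma keypt (s : ℝ) (hs : s ^ 2 = 3) (hs1 : 1 ≤ s) (a b : ℕ) :
    0 ≤ (2 - s) * (a : ℝ) ^ 2 + (2 + s) * (b : ℝ) ^ 2 - 2 * ((a : ℝ) * (b : ℝ))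
      + s * (a : ℝ) - (2 + s) * (b : ℝ) := by
  rcases le_or_gt a b with hab | hab
  · rcases Nat.eq_zero_or_pos b with hb | hb
    · subst hb
      interval_cases a
      simp
    · have hy1 : (1 : ℝ) ≤ (b : ℝ) := by exact_mod_cast hb
      have hx : (0 : ℝ) ≤ (a : ℝ) := Nat.cast_nonneg a
      have he : (0 : ℝ) ≤ (b : ℝ) - (a : ℝ) := by
        have : (a : ℝ) ≤ b := by exact_mod_cast hab
        linarith
      have he2 : ((b : ℝ) - (a : ℝ)) ≤ ((b : ℝ) - (a : ℝ)) ^ 2 := by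
        rcases eq_or_lt_of_le hab with h | h
        · simp [h]
        · have : (1 : ℝ) ≤ (b : ℝ) - (a : ℝ) := by
            have : (a : ℝ) + 1 ≤ b := by exact_mod_cast h
            linarith
          nlinarith
      nlinarith [mul_nonneg (mul_nonneg (by linarith : (0:ℝ) ≤ s - 1) he)
          (by linarith : (0:ℝ) ≤ (b:ℝ) - 1),
        mul_nonneg (by exact_mod_cast Nat.zero_le b : (0:ℝ) ≤ (b:ℝ))
          (by linarith : (0:ℝ) ≤ (b:ℝ) - 1)]
  · have hd : (1 : ℝ) ≤ (a : ℝ) - (b : ℝ) := by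
      have : (b : ℝ) + 1 ≤ a := by exact_mod_cast hab
      linarith
    have hdd : (s ^ 2 - 3) * ((a : ℝ) - (b : ℝ)) ^ 2 = 0 := by rw [hs]; ring
    nlinarith [sq_nonneg (2 * (b : ℝ) - (s - 1) * ((a : ℝ) - (b : ℝ)) - 1), hdd]

theorem stmt_14 {E : Type*} [Fintype E] (ε : ℝ) (h0 : 0 ≤ ε) (h1 : ε ≤ 1)
    (n m : E → ℕ)
    (hi : ∑ e : E, ((n e : ℝ)) ^ 2 + ((1 - ε) / (1 + ε)) * ∑ e : E, (n e : ℝ) ≤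
      ∑ e : E, ((m e : ℝ)) ^ 2 + ((1 - ε) / (1 + ε)) * ∑ e : E, (m e : ℝ))
    (hii : ∑ e : E, (((n e : ℝ)) ^ 2 - (ε / (1 + ε)) * n e) ≤
      ∑ e : E, (m e : ℝ) * ((n e : ℝ) + 1 / (1 + ε))) :
    ∑ e : E, ((n e : ℝ)) ^ 2 ≤
      ((Real.sqrt 3 + 1) / (Real.sqrt 3 + ε)) * ∑ e : E, ((m e : ℝ)) ^ 2 := by
  set s := Real.sqrt 3 with hsdef
  have hs : s ^ 2 = 3 := Real.sq_sqrt (by norm_num)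
  have hs1 : (1 : ℝ) ≤ s := by
    nlinarith [Real.sqrt_nonneg 3, hs]
  have hs2 : s ≤ 2 := by nlinarith [Real.sqrt_nonneg 3, hs]
  have hu : (0 : ℝ) < 1 + ε := by linarith
  -- atoms
  set N2 := ∑ e : E, ((n e : ℝ)) ^ 2 with hN2
  set M2 := ∑ e : E, ((m e : ℝ)) ^ 2 with hM2
  set N1 := ∑ e : E, (n e : ℝ) with hN1
  set M1 := ∑ e : E, (m e : ℝ) with hM1
  set X := ∑ e : E, ((m e : ℝ) * (n e : ℝ)) with hX
  -- rewrite hii in atoms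
  have hiiL : ∑ e : E, (((n e : ℝ)) ^ 2 - (ε / (1 + ε)) * n e)
      = N2 - (ε / (1 + ε)) * N1 := by
    rw [hN2, hN1, Finset.mul_sum, ← Finset.sum_sub_distrib]
  have hiiR : ∑ e : E, (m e : ℝ) * ((n e : ℝ) + 1 / (1 + ε))
      = X + (1 / (1 + ε)) * M1 := by
    rw [hX, hM1, Finset.mul_sum, ← Finset.sum_add_distrib]
    exact Finset.sum_congr rfl fun e _ => by ring
  rw [hiiL, hiiR] at hii
  -- multiply hi and hii by (1+ε)
  have hiu : (1 + ε) * N2 + (1 - ε) * N1 ≤ (1 + ε) * M2 + (1 - ε) * M1 := by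
    have h := mul_le_mul_of_nonneg_left hi hu.le
    have e1 : (1 + ε) * (N2 + (1 - ε) / (1 + ε) * N1)
        = (1 + ε) * N2 + (1 - ε) * N1 := by field_simp
    have e2 : (1 + ε) * (M2 + (1 - ε) / (1 + ε) * M1)
        = (1 + ε) * M2 + (1 - ε) * M1 := by field_simp
    rw [e1, e2] at h
    exact h
  have hiiu : (1 + ε) * N2 - ε * N1 ≤ (1 + ε) * X + M1 := by
    have h := mul_le_mul_of_nonneg_left hii hu.le
    have e1 : (1 + ε) * (N2 - ε / (1 + ε) * N1)
        = (1 + ε) * N2 - ε * N1 := by field_simp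
    have e2 : (1 + ε) * (X + 1 / (1 + ε) * M1)
        = (1 + ε) * X + M1 := by field_simp
    rw [e1, e2] at h
    exact h
  -- sum of pointwise inequality
  have hG0 : 0 ≤ ∑ e : E, ((2 - s) * ((n e : ℝ)) ^ 2 + (2 + s) * ((m e : ℝ)) ^ 2
      - 2 * ((n e : ℝ) * (m e : ℝ)) + s * (n e : ℝ) - (2 + s) * (m e : ℝ)) :=
    Finset.sum_nonneg fun e _ => keypt s hs hs1 (n e) (m e)
  have hGeq : ∑ e : E, ((2 - s) * ((n e : ℝ)) ^ 2 + (2 + s) * ((m e : ℝ)) ^ 2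
      - 2 * ((n e : ℝ) * (m e : ℝ)) + s * (n e : ℝ) - (2 + s) * (m e : ℝ))
      = (2 - s) * N2 + (2 + s) * M2 - 2 * X + s * N1 - (2 + s) * M1 := by
    rw [hN2, hM2, hX, hN1, hM1, Finset.mul_sum, Finset.mul_sum, Finset.mul_sum,
      Finset.mul_sum, Finset.mul_sum]
    rw [← Finset.sum_add_distrib, ← Finset.sum_sub_distrib, ← Finset.sum_add_distrib,
      ← Finset.sum_sub_distrib]
    exact Finset.sum_congr rfl fun e _ => by ring
  rw [hGeq] at hG0
  -- combine
  have hW1 : (0 : ℝ) ≤ (ε * s + 2 * ε + s) / 2 := by nlinarith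
  have c1 : (0 : ℝ) ≤ ((ε * s + 2 * ε + s) / 2) *
      (((1 + ε) * M2 + (1 - ε) * M1) - ((1 + ε) * N2 + (1 - ε) * N1)) :=
    mul_nonneg hW1 (by linarith)
  have c2 : (0 : ℝ) ≤ (1 - ε) * (((1 + ε) * X + M1) - ((1 + ε) * N2 - ε * N1)) :=
    mul_nonneg (by linarith) (by linarith)
  have c3 : (0 : ℝ) ≤ ((1 + ε) * (1 - ε) / 2) *
      ((2 - s) * N2 + (2 + s) * M2 - 2 * X + s * N1 - (2 + s) * M1) :=
    mul_nonneg (by nlinarith) hG0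
  have hmain : (1 + ε) * ((s + ε) * N2) ≤ (1 + ε) * ((s + 1) * M2) := by linarith [c1, c2, c3]
  have hmain2 : (s + ε) * N2 ≤ (s + 1) * M2 := le_of_mul_le_mul_left hmain hu
  have hse : (0 : ℝ) < s + ε := by linarith
  rw [div_mul_eq_mul_div, le_div_iff₀ hse]
  linarith
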